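/- Let A be an irreducible tridiagonal (d+1)×(d+1) matrix over a field K with superdiagonal entries b_0,...,b_{d-1} and subdiagonal entries c_1,...,c_d (all b_{i-1}c_i ≠ 0), and let A* be the diagonal matrix with distinct diagonal entries θ*_0,...,θ*_d. If d is even, then the null space of AA* - A*A has dimension 1 and is spanned by the vector (γ_0,...,γ_d) where γ_k = 0 for k odd and γ_k = ∏_{1 ≤ i ≤ k-1, i odd} c_i(θ*_{i-1} - θ*_i) / (b_i(θ*_i - θ*_{i+1})) for k even. -/

import Mathlib

open Matrix Finset



/-- extension of a `Fin (d+1)`-vector to `ℕ` by zero. -/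
def pext {d : ℕ} {K : Type*} [Zero K] (x : Fin (d+1) → K) (m : ℕ) : K :=
  if h : m < d+1 then x ⟨m, h⟩ else 0

/-- the coordinate sequence of the spanning vector. -/
def wseq {K : Type*} [Field K] (b c θ : ℕ → K) (k : ℕ) : K :=
  if Odd k then 0 else ∏ i ∈ (Finset.range k).filter (fun i => Odd i),
    c i * (θ (i-1) - θ i) / (b i * (θ i - θ (i+1)))

lemma wseq_zero {K : Type*} [Field K] (b c θ : ℕ → K) : wseq b c θ 0 = 1 := by
  simp [wseq]

lemma wseq_odd {K : Type*} [Field K] (b c θ : ℕ → K) {k : ℕ} (hk : Odd k) :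
    wseq b c θ k = 0 := by
  simp [wseq, hk]

lemma wseq_step {K : Type*} [Field K] (b c θ : ℕ → K) {m : ℕ} (hm : Even m) :
    wseq b c θ (m+2) = wseq b c θ m *
      (c (m+1) * (θ m - θ (m+1)) / (b (m+1) * (θ (m+1) - θ (m+2)))) := by
  have h1 : ¬ Odd m := by simpa [Nat.not_odd_iff_even] using hm
  have h2 : Odd (m+1) := Even.add_one hm
  have h3 : ¬ Odd (m+2) := by
    simpa [Nat.not_odd_iff_even] using hm.add (by norm_num : Even 2)
  simp only [wseq, if_neg h1, if_neg h3, Finset.prod_filter, Finset.prod_range_succ,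
    if_pos h2, if_neg h1]
  simp

lemma row_lemma {d : ℕ} {K : Type*} [Field K]
    (b c θ : ℕ → K) (A : Matrix (Fin (d+1)) (Fin (d+1)) K)
    (hsup : ∀ i j : Fin (d+1), (i : ℕ) + 1 = (j : ℕ) → A i j = b i)
    (hsub : ∀ i j : Fin (d+1), (i : ℕ) = (j : ℕ) + 1 → A i j = c i)
    (hzero : ∀ i j : Fin (d+1), (i : ℕ) + 1 < (j : ℕ) ∨ (j : ℕ) + 1 < (i : ℕ) → A i j = 0)
    (x : Fin (d+1) → K) (k : ℕ) (hk : k < d+1) :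
    ((A * Matrix.diagonal (fun i : Fin (d+1) => θ (i : ℕ))
      - Matrix.diagonal (fun i : Fin (d+1) => θ (i : ℕ)) * A) *ᵥ x) ⟨k, hk⟩
    = c k * (θ (k-1) - θ k) * pext x (k-1) + b k * (θ (k+1) - θ k) * pext x (k+1) := by
  have expand : ((A * Matrix.diagonal (fun i : Fin (d+1) => θ (i : ℕ))
      - Matrix.diagonal (fun i : Fin (d+1) => θ (i : ℕ)) * A) *ᵥ x) ⟨k, hk⟩
      = ∑ j : Fin (d+1), A ⟨k, hk⟩ j * ((θ (j : ℕ) - θ k) * x j) := by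
    simp [Matrix.mulVec, dotProduct, Matrix.sub_apply, Matrix.mul_diagonal,
      Matrix.diagonal_mul, sub_mul, mul_comm, mul_left_comm, mul_assoc]
  rw [expand]
  set f : Fin (d+1) → K := fun j => A ⟨k, hk⟩ j * ((θ (j : ℕ) - θ k) * x j) with hf
  have hsplit : ∀ j : Fin (d+1), f j
      = (if (j:ℕ)+1 = k then f j else 0) + (if k+1 = (j:ℕ) then f j else 0) := by
    intro j
    by_cases h1 : (j:ℕ)+1 = k
    · have h2 : ¬ (k+1 = (j:ℕ)) := by omega
      simp [h1, h2]
    · by_cases h2 : k+1 = (j:ℕ)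
      · simp [h1, h2]
      · simp only [if_neg h1, if_neg h2, add_zero]
        by_cases h3 : (j:ℕ) = k
        · have : θ (j:ℕ) - θ k = 0 := by rw [h3, sub_self]
          simp [hf, this]
        · have hA : A ⟨k, hk⟩ j = 0 := hzero _ _ (by simp; omega)
          simp [hf, hA]
  rw [Finset.sum_congr rfl (fun j _ => hsplit j), Finset.sum_add_distrib]
  congr 1
  · -- subdiagonal term
    by_cases hk1 : 1 ≤ k
    · have hkm : k - 1 < d + 1 := by omega
      have hcond : ∀ j : Fin (d+1), ((j:ℕ)+1 = k) ↔ (j = ⟨k-1, hkm⟩) := by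
        intro j
        constructor
        · intro h; exact Fin.ext (by simp; omega)
        · intro h; subst h; simp; omega
      simp only [hcond]
      rw [Finset.sum_ite_eq' Finset.univ (⟨k-1, hkm⟩ : Fin (d+1)) f]
      simp only [Finset.mem_univ, if_pos]
      have hA : A ⟨k, hk⟩ ⟨k-1, hkm⟩ = c k := hsub _ _ (by simp; omega)
      have hpx : pext x (k-1) = x ⟨k-1, hkm⟩ := by simp [pext, hkm]
      rw [hf]
      simp only [hA, hpx]
      ring
    · have hk0 : k = 0 := by omega
      subst hk0
      have : ∀ j : Fin (d+1), ¬ ((j:ℕ)+1 = 0) := by intro j; omega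
      simp [this]
  · -- superdiagonal term
    by_cases hk2 : k < d
    · have hkp : k + 1 < d + 1 := by omega
      have hcond : ∀ j : Fin (d+1), (k+1 = (j:ℕ)) ↔ (j = ⟨k+1, hkp⟩) := by
        intro j
        constructor
        · intro h; exact Fin.ext (by simp; omega)
        · intro h; subst h; simp
      simp only [hcond]
      rw [Finset.sum_ite_eq' Finset.univ (⟨k+1, hkp⟩ : Fin (d+1)) f]
      simp only [Finset.mem_univ, if_pos]
      have hA : A ⟨k, hk⟩ ⟨k+1, hkp⟩ = b k := hsup _ _ (by simp)
      have hpx : pext x (k+1) = x ⟨k+1, hkp⟩ := by simp [pext, hkp]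
      rw [hf]
      simp only [hA, hpx]
      ring
    · have hkd : k = d := by omega
      have : ∀ j : Fin (d+1), ¬ (k+1 = (j:ℕ)) := by
        intro j; have := j.isLt; omega
      have hpx : pext x (k+1) = 0 := by simp [pext]; omega
      simp [this, hpx]

/-- for d even, the null space of A A* - A* A has dimension 1,
spanned by the stated vector. -/
theorem stmt4 {d : ℕ} {K : Type*} [Field K]
    (b c θ : ℕ → K) (A : Matrix (Fin (d+1)) (Fin (d+1)) K)
    (hsup : ∀ i j : Fin (d+1), (i : ℕ) + 1 = (j : ℕ) → A i j = b i)
    (hsub : ∀ i j : Fin (d+1), (i : ℕ) = (j : ℕ) + 1 → A i j = c i)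
    (hzero : ∀ i j : Fin (d+1), (i : ℕ) + 1 < (j : ℕ) ∨ (j : ℕ) + 1 < (i : ℕ) → A i j = 0)
    (hbc : ∀ i : ℕ, 1 ≤ i → i ≤ d → b (i-1) * c i ≠ 0)
    (hθ : ∀ i j : ℕ, i ≤ d → j ≤ d → θ i = θ j → i = j)
    (hd : Even d)
    (As : Matrix (Fin (d+1)) (Fin (d+1)) K)
    (hAs : As = Matrix.diagonal (fun i : Fin (d+1) => θ (i : ℕ)))
    (v : Fin (d+1) → K)
    (hv : v = fun k : Fin (d+1) => if Odd (k : ℕ) then 0 else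
      ∏ i ∈ (Finset.range (k : ℕ)).filter (fun i => Odd i),
        c i * (θ (i-1) - θ i) / (b i * (θ i - θ (i+1)))) :
    Module.finrank K (LinearMap.ker (Matrix.toLin' (A * As - As * A))) = 1 ∧
    LinearMap.ker (Matrix.toLin' (A * As - As * A)) = Submodule.span K {v} := by
  subst hAs
  -- basic nonvanishing facts
  have hbne : ∀ k, k < d → b k ≠ 0 := by
    intro k hk h
    exact hbc (k+1) (by omega) (by omega) (by rw [Nat.add_sub_cancel, h, zero_mul])
  have hθne : ∀ k, k < d → θ k - θ (k+1) ≠ 0 := by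
    intro k hk h
    have := hθ k (k+1) (by omega) (by omega) (sub_eq_zero.mp h)
    omega
  -- v coordinates are wseq
  have hvw : ∀ i : Fin (d+1), v i = wseq b c θ (i : ℕ) := by
    intro i; rw [hv]; rfl
  -- kernel membership criterion
  have hker : ∀ x : Fin (d+1) → K, Matrix.toLin' (A * Matrix.diagonal (fun i : Fin (d+1) => θ (i:ℕ))
      - Matrix.diagonal (fun i : Fin (d+1) => θ (i:ℕ)) * A) x = 0 ↔
      ∀ k, k ≤ d → c k * (θ (k-1) - θ k) * pext x (k-1)
        + b k * (θ (k+1) - θ k) * pext x (k+1) = 0 := by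
    intro x
    rw [Matrix.toLin'_apply]
    constructor
    · intro h k hkd
      rw [← row_lemma b c θ A hsup hsub hzero x k (by omega)]
      rw [h]; rfl
    · intro h
      funext i
      have hi := i.isLt
      have : i = ⟨(i:ℕ), hi⟩ := by exact (Fin.eta i hi).symm
      rw [this, row_lemma b c θ A hsup hsub hzero x (i:ℕ) hi]
      exact h (i:ℕ) (by omega)
  -- v is in the kernel
  have hvker : Matrix.toLin' (A * Matrix.diagonal (fun i : Fin (d+1) => θ (i:ℕ))
      - Matrix.diagonal (fun i : Fin (d+1) => θ (i:ℕ)) * A) v = 0 := by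
    rw [hker]
    intro k hkd
    have hpv : ∀ m, pext v m = if m < d+1 then wseq b c θ m else 0 := by
      intro m
      by_cases h : m < d+1
      · simp [pext, h, hvw]
      · simp [pext, h]
    rcases Nat.even_or_odd k with hke | hko
    · -- even k: both summands vanish
      have h1 : c k * (θ (k-1) - θ k) * pext v (k-1) = 0 := by
        rcases Nat.eq_zero_or_pos k with rfl | hk1
        · simp
        · have hodd : Odd (k-1) := by
            rcases hke with ⟨n, rfl⟩; exact ⟨n-1, by omega⟩
          rw [hpv, if_pos (by omega), wseq_odd b c θ hodd, mul_zero]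
      have h2 : b k * (θ (k+1) - θ k) * pext v (k+1) = 0 := by
        by_cases h : k+1 < d+1
        · have hodd : Odd (k+1) := Even.add_one hke
          rw [hpv, if_pos h, wseq_odd b c θ hodd, mul_zero]
        · rw [hpv, if_neg h, mul_zero]
      rw [h1, h2, add_zero]
    · -- odd k
      obtain ⟨n, rfl⟩ := hko
      have hklt : 2*n+1 < d := by
        rcases hd with ⟨e, he⟩; omega
      have hb := hbne (2*n+1) hklt
      have hs := hθne (2*n+1) hklt
      have hm1 : (2*n+1) - 1 = 2*n := by omega
      rw [hm1, hpv, hpv, if_pos (by omega), if_pos (by omega)]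
      rw [wseq_step b c θ (by exact ⟨n, by ring⟩)]
      field_simp
      ring
  -- uniqueness: any kernel element is a multiple of v
  have key : ∀ x : Fin (d+1) → K,
      (∀ k, k ≤ d → c k * (θ (k-1) - θ k) * pext x (k-1)
        + b k * (θ (k+1) - θ k) * pext x (k+1) = 0) →
      ∀ k, k ≤ d → pext x k = pext x 0 * wseq b c θ k := by
    intro x hx k
    induction k using Nat.strong_induction_on with
    | _ k ih =>
      match k, ih with
      | 0, _ =>
        intro _
        rw [wseq_zero, mul_one]
      | 1, _ =>
        intro h1
        have he := hx 0 (by omega)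
        simp only [Nat.zero_sub, sub_self, mul_zero, zero_mul, zero_add] at he
        have hb := hbne 0 (by omega)
        have hs : θ 1 - θ 0 ≠ 0 := fun h => hθne 0 (by omega) (by
          rw [sub_eq_zero] at h ⊢; exact h.symm)
        have : pext x 1 = 0 := by
          rcases mul_eq_zero.mp he with h | h
          · exact absurd h (mul_ne_zero hb hs)
          · exact h
        rw [this, wseq_odd b c θ (by exact ⟨0, by ring⟩), mul_zero]
      | (m+2), ih =>
        intro hkd
        have hm := ih m (by omega) (by omega)
        have he := hx (m+1) (by omega)
        rw [Nat.add_sub_cancel] at he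
        have hb := hbne (m+1) (by omega)
        have hs := hθne (m+1) (by omega)
        have hs' : θ (m+2) - θ (m+1) ≠ 0 := fun h => hs (by
          rw [sub_eq_zero] at h ⊢; exact h.symm)
        rcases Nat.even_or_odd m with hme | hmo
        · have hP : pext x (m+2) = -(c (m+1) * (θ m - θ (m+1)) * pext x m)
              / (b (m+1) * (θ (m+2) - θ (m+1))) := by
            field_simp
            linear_combination he
          rw [hP, hm, wseq_step b c θ hme]
          field_simp
          ring
        · have hxm : pext x m = 0 := by
            rw [hm, wseq_odd b c θ hmo, mul_zero]
          rw [hxm, mul_zero, zero_add] at he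
          have : pext x (m+2) = 0 := by
            rcases mul_eq_zero.mp he with h | h
            · exact absurd h (mul_ne_zero hb hs')
            · exact h
          rw [this, wseq_odd b c θ (by rcases hmo with ⟨j, hj⟩; exact ⟨j+1, by omega⟩), mul_zero]
  -- v ≠ 0
  have hvne : v ≠ 0 := by
    intro h
    have h0 : v 0 = 0 := congrFun h 0
    rw [hvw] at h0
    simp [wseq_zero] at h0
  -- kernel = span
  have hkereq : LinearMap.ker (Matrix.toLin' (A * Matrix.diagonal (fun i : Fin (d+1) => θ (i:ℕ))
      - Matrix.diagonal (fun i : Fin (d+1) => θ (i:ℕ)) * A)) = Submodule.span K {v} := by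
    apply le_antisymm
    · intro x hx
      rw [LinearMap.mem_ker] at hx
      rw [Submodule.mem_span_singleton]
      refine ⟨pext x 0, ?_⟩
      funext i
      have hi := i.isLt
      have hxi := key x ((hker x).mp hx) (i:ℕ) (by omega)
      have hpxi : pext x (i:ℕ) = x i := by simp [pext, hi]
      rw [← hpxi, hxi]
      simp [hvw i]
    · rw [Submodule.span_le, Set.singleton_subset_iff]
      exact LinearMap.mem_ker.mpr hvker
  refine ⟨?_, hkereq⟩
  rw [hkereq]
  exact finrank_span_singleton hvne
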